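/- Let ã, b̃, c̃, d̃ > 0, p̃ ∈ (4, ∞), q̃ ∈ (0, 2), and set K = 8(4−q̃)/(p̃(p̃−2)(p̃−q̃)). Assume that (K^{(4−q̃)/(p̃−4)} − K^{(p̃−q̃)/(p̃−4)}) · [ (ã/d̃)·(b̃/c̃)^{(2−q̃)/(p̃−4)} + (1/d̃)·b̃^{(p̃−q̃)/(p̃−4)} / c̃^{(4−q̃)/(p̃−4)} ] > 1. Then the function f(t) = ã t² + b̃ t⁴ − c̃ t^{p̃} − d̃ t^{q̃} on [0, ∞) has a local strict minimum at a negative level and a global strict maximum at a positive level; that is, there exist 0 < t₁ < t₂ such that f(t₁) < 0, f(t₂) > 0, f(t₁) < f(t) for all t in some punctured neighborhood of t₁ in [0, ∞), and f(t) < f(t₂) for every t ∈ [0, ∞) with t ≠ t₂. -/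

import Mathlib

open Real

private lemma contRpowAux {y : ℝ} (hy : 0 < y) : Continuous fun t : ℝ => t ^ y :=
  continuous_iff_continuousAt.2 fun x => Real.continuousAt_rpow_const x y (Or.inr hy.le)

private lemma bigRpow (A B r L : ℝ) (hA : 0 ≤ A) (hB : 0 < B) (hr : 0 < r) :
    ∃ T : ℝ, L < T ∧ 1 ≤ T ∧ A < B * T ^ r := by
  refine ⟨max (max (L + 1) 1) ((A / B) ^ r⁻¹ + 1), ?_, ?_, ?_⟩
  · have h : L < L + 1 := by linarith
    exact h.trans_le ((le_max_left _ _).trans (le_max_left _ _))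
  · exact (le_max_right _ 1).trans (le_max_left _ _)
  · have hAB : 0 ≤ A / B := div_nonneg hA hB.le
    have h1 : (A / B) ^ r⁻¹ < max (max (L + 1) 1) ((A / B) ^ r⁻¹ + 1) := by
      have h : (A / B) ^ r⁻¹ < (A / B) ^ r⁻¹ + 1 := by linarith
      exact h.trans_le (le_max_right _ _)
    have h2 : ((A / B) ^ r⁻¹) ^ r < (max (max (L + 1) 1) ((A / B) ^ r⁻¹ + 1)) ^ r :=
      Real.rpow_lt_rpow (Real.rpow_nonneg hAB _) h1 hr
    rw [Real.rpow_inv_rpow hAB hr.ne'] at h2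
    calc A = B * (A / B) := by field_simp
    _ < B * (max (max (L + 1) 1) ((A / B) ^ r⁻¹ + 1)) ^ r := (mul_lt_mul_iff_right₀ hB).2 h2


set_option maxHeartbeats 2000000 in
theorem stmt_0 (a b c d p q : ℝ) (ha : 0 < a) (hb : 0 < b) (hc : 0 < c) (hd : 0 < d)
    (hp : 4 < p) (hq0 : 0 < q) (hq2 : q < 2)
    (K : ℝ) (hK : K = 8 * (4 - q) / (p * (p - 2) * (p - q)))
    (hcond : (K ^ ((4 - q) / (p - 4)) - K ^ ((p - q) / (p - 4))) *
      ((a / d) * (b / c) ^ ((2 - q) / (p - 4)) +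
        (1 / d) * b ^ ((p - q) / (p - 4)) / c ^ ((4 - q) / (p - 4))) > 1)
    (f : ℝ → ℝ) (hf : ∀ t, f t = a * t ^ 2 + b * t ^ 4 - c * t ^ p - d * t ^ q) :
    ∃ t₁ t₂ : ℝ, 0 < t₁ ∧ t₁ < t₂ ∧ f t₁ < 0 ∧ 0 < f t₂ ∧
      (∃ ε > 0, ∀ t, 0 ≤ t → |t - t₁| < ε → t ≠ t₁ → f t₁ < f t) ∧
      (∀ t, 0 ≤ t → t ≠ t₂ → f t < f t₂) := by
  have hfe : f = fun t => a * t ^ 2 + b * t ^ 4 - c * t ^ p - d * t ^ q := funext hf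
  subst hfe
  have hp4 : (0:ℝ) < p - 4 := by linarith
  have hp0 : (0:ℝ) < p := by linarith
  have hp2 : (0:ℝ) < p - 2 := by linarith
  have h2q : (0:ℝ) < 2 - q := by linarith
  have h4q : (0:ℝ) < 4 - q := by linarith
  have hpq : (0:ℝ) < p - q := by linarith
  have hK0 : 0 < K := by rw [hK]; positivity
  have hK1 : K < 1 := by
    rw [hK, div_lt_one (by positivity)]
    nlinarith [mul_pos hp4 h4q, mul_pos (mul_pos hp4 hp4) hp4,
      mul_pos (mul_pos hp4 hp4) h4q, mul_pos hp4 hp4]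
  set X := K * b / c with hXdef
  have hX : 0 < X := by positivity
  set t0 := X ^ (1 / (p - 4)) with ht0def
  have ht0 : 0 < t0 := Real.rpow_pos_of_pos hX _
  -- the auxiliary functions
  set H : ℝ → ℝ := fun t => 2*a*t^(2-q) + 4*b*t^(4-q) - c*p*t^(p-q) - d*q with hHdef
  set Φ : ℝ → ℝ := fun t => 2*a*(2-q) + 4*b*(4-q)*t^((2:ℝ)) - c*p*(p-q)*t^(p-2) with hPdef
  have hfc : Continuous (fun t : ℝ => a * t ^ 2 + b * t ^ 4 - c * t ^ p - d * t ^ q) := by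
    exact (((continuous_const.mul (continuous_pow 2)).add
      (continuous_const.mul (continuous_pow 4))).sub
      (continuous_const.mul (contRpowAux hp0))).sub (continuous_const.mul (contRpowAux hq0))
  have hHc : Continuous H := by
    rw [hHdef]
    exact (((continuous_const.mul (contRpowAux h2q)).add
      (continuous_const.mul (contRpowAux h4q))).sub
      (continuous_const.mul (contRpowAux hpq))).sub continuous_const
  have hPc : Continuous Φ := by
    rw [hPdef]
    exact (continuous_const.add
      (continuous_const.mul (contRpowAux (by norm_num : (0:ℝ) < 2)))).sub
      (continuous_const.mul (contRpowAux hp2))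
  -- derivatives
  have hfD : ∀ t : ℝ, 0 < t →
      HasDerivAt (fun t : ℝ => a * t ^ 2 + b * t ^ 4 - c * t ^ p - d * t ^ q)
        (t ^ (q-1) * H t) t := by
    intro t ht
    have h1 : HasDerivAt (fun t : ℝ => t ^ p) (p * t ^ (p-1)) t :=
      Real.hasDerivAt_rpow_const (Or.inl ht.ne')
    have h2 : HasDerivAt (fun t : ℝ => t ^ q) (q * t ^ (q-1)) t :=
      Real.hasDerivAt_rpow_const (Or.inl ht.ne')
    have h3 : HasDerivAt (fun t : ℝ => t ^ (2:ℕ)) (2 * t) t := by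
      simpa using hasDerivAt_pow 2 t
    have h4 : HasDerivAt (fun t : ℝ => t ^ (4:ℕ)) (4 * t ^ (3:ℕ)) t := by
      simpa using hasDerivAt_pow 4 t
    have := (((h3.const_mul a).add (h4.const_mul b)).sub (h1.const_mul c)).sub (h2.const_mul d)
    refine this.congr_deriv (Eq.symm ?_)
    have e1 : t ^ (q-1) * t ^ (2-q) = t := by
      rw [← Real.rpow_add ht, show q-1+(2-q) = 1 by ring, Real.rpow_one]
    have e2 : t ^ (q-1) * t ^ (4-q) = t ^ (3:ℕ) := by
      rw [← Real.rpow_add ht, show q-1+(4-q) = ((3:ℕ):ℝ) by norm_num, Real.rpow_natCast]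
    have e3 : t ^ (q-1) * t ^ (p-q) = t ^ (p-1) := by
      rw [← Real.rpow_add ht, show q-1+(p-q) = p-1 by ring]
    simp only [hHdef]
    linear_combination (2*a)*e1 + (4*b)*e2 - (c*p)*e3
  have hHD : ∀ t : ℝ, 0 < t → HasDerivAt H (t ^ (1-q) * Φ t) t := by
    intro t ht
    have h1 : HasDerivAt (fun t : ℝ => t ^ (2-q)) ((2-q) * t ^ (2-q-1)) t :=
      Real.hasDerivAt_rpow_const (Or.inl ht.ne')
    have h2 : HasDerivAt (fun t : ℝ => t ^ (4-q)) ((4-q) * t ^ (4-q-1)) t :=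
      Real.hasDerivAt_rpow_const (Or.inl ht.ne')
    have h3 : HasDerivAt (fun t : ℝ => t ^ (p-q)) ((p-q) * t ^ (p-q-1)) t :=
      Real.hasDerivAt_rpow_const (Or.inl ht.ne')
    have := (((h1.const_mul (2*a)).add (h2.const_mul (4*b))).sub
      (h3.const_mul (c*p))).sub (hasDerivAt_const t (d*q))
    rw [hHdef]
    refine this.congr_deriv (Eq.symm ?_)
    have e1 : t ^ (1-q) * t ^ ((2:ℝ)) = t ^ (4-q-1) := by
      rw [← Real.rpow_add ht, show 1-q+(2:ℝ) = 4-q-1 by ring]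
    have e2 : t ^ (1-q) * t ^ (p-2) = t ^ (p-q-1) := by
      rw [← Real.rpow_add ht, show 1-q+(p-2) = p-q-1 by ring]
    have e3 : t ^ (1-q) = t ^ (2-q-1) := by rw [show (1:ℝ)-q = 2-q-1 by ring]
    simp only [hPdef]
    linear_combination (4*b*(4-q))*e1 - (c*p*(p-q))*e2 + (2*a*(2-q))*e3
  have hPD : ∀ t : ℝ, 0 < t →
      HasDerivAt Φ (t * (8*b*(4-q) - c*p*(p-2)*(p-q) * t ^ (p-4))) t := by
    intro t ht
    have h1 : HasDerivAt (fun t : ℝ => t ^ ((2:ℝ))) ((2:ℝ) * t ^ ((2:ℝ)-1)) t :=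
      Real.hasDerivAt_rpow_const (Or.inl ht.ne')
    have h2 : HasDerivAt (fun t : ℝ => t ^ (p-2)) ((p-2) * t ^ (p-2-1)) t :=
      Real.hasDerivAt_rpow_const (Or.inl ht.ne')
    have := ((hasDerivAt_const t (2*a*(2-q))).add (h1.const_mul (4*b*(4-q)))).sub
      (h2.const_mul (c*p*(p-q)))
    rw [hPdef]
    refine this.congr_deriv (Eq.symm ?_)
    have e1 : t ^ ((2:ℝ)-1) = t := by norm_num
    have e2 : t * t ^ (p-4) = t ^ (p-2-1) := by
      nth_rewrite 1 [← Real.rpow_one t]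
      rw [← Real.rpow_add ht, show (1:ℝ)+(p-4) = p-2-1 by ring]
    rw [e1, ← e2]; ring
  -- chunk 2
  have hCpos : 0 < c*p*(p-2)*(p-q) := by positivity
  have ht0pow : t0 ^ (p-4) = X := by
    rw [ht0def, ← Real.rpow_mul hX.le, one_div, inv_mul_cancel₀ hp4.ne', Real.rpow_one]
  have hXeq : c*p*(p-2)*(p-q) * X = 8*b*(4-q) := by
    rw [hXdef, hK]; field_simp
  have hPmono : StrictMonoOn Φ (Set.Icc 0 t0) := by
    apply strictMonoOn_of_deriv_pos (convex_Icc _ _) hPc.continuousOn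
    intro x hx
    rw [interior_Icc] at hx
    rw [(hPD x hx.1).deriv]
    have hxp : x ^ (p-4) < X := ht0pow ▸ Real.rpow_lt_rpow hx.1.le hx.2 hp4
    have hlt : c*p*(p-2)*(p-q) * x^(p-4) < 8*b*(4-q) := by
      calc c*p*(p-2)*(p-q) * x^(p-4) < c*p*(p-2)*(p-q) * X := (mul_lt_mul_iff_right₀ hCpos).2 hxp
      _ = 8*b*(4-q) := hXeq
    exact mul_pos hx.1 (by linarith)
  have hPanti : StrictAntiOn Φ (Set.Ici t0) := by
    apply strictAntiOn_of_deriv_neg (convex_Ici _) hPc.continuousOn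
    intro x hx
    rw [interior_Ici] at hx
    have hx0 : 0 < x := ht0.trans hx
    rw [(hPD x hx0).deriv]
    have hxp : X < x ^ (p-4) := ht0pow ▸ Real.rpow_lt_rpow ht0.le hx hp4
    have hlt : 8*b*(4-q) < c*p*(p-2)*(p-q) * x^(p-4) := by
      rw [← hXeq]; exact (mul_lt_mul_iff_right₀ hCpos).2 hxp
    exact mul_neg_of_pos_of_neg hx0 (by linarith)
  have hP0 : Φ 0 = 2*a*(2-q) := by
    simp [hPdef, Real.zero_rpow (two_ne_zero), Real.zero_rpow hp2.ne']
  have hPpos0 : ∀ x ∈ Set.Icc (0:ℝ) t0, 0 < Φ x := by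
    intro x hx
    rcases eq_or_lt_of_le hx.1 with h|h
    · rw [← h, hP0]; positivity
    · have h1 := hPmono (Set.left_mem_Icc.2 ht0.le) hx h
      rw [hP0] at h1
      nlinarith
  obtain ⟨T1, hT1gt, hT1ge1, hT1big⟩ := bigRpow (2*a*(2-q) + 4*b*(4-q)) (c*p*(p-q)) (p-4) t0
    (by positivity) (by positivity) hp4
  have hPT1 : Φ T1 < 0 := by
    have hT1pos : (0:ℝ) < T1 := by linarith
    have h1le : (1:ℝ) ≤ T1 ^ ((2:ℝ)) := by
      calc (1:ℝ) = 1 ^ ((2:ℝ)) := (Real.one_rpow _).symm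
      _ ≤ T1 ^ ((2:ℝ)) := Real.rpow_le_rpow zero_le_one hT1ge1 (by norm_num)
    have hsplit : T1 ^ (p-2) = T1 ^ (p-4) * T1 ^ ((2:ℝ)) := by
      rw [← Real.rpow_add hT1pos, show p-4+(2:ℝ) = p-2 by ring]
    have key : (2*a*(2-q) + 4*b*(4-q)) * T1^((2:ℝ)) < c*p*(p-q) * T1^(p-2) := by
      rw [hsplit]
      calc (2*a*(2-q) + 4*b*(4-q)) * T1^((2:ℝ))
          < (c*p*(p-q) * T1^(p-4)) * T1^((2:ℝ)) :=
            mul_lt_mul_of_pos_right hT1big (by positivity)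
      _ = c*p*(p-q) * (T1^(p-4) * T1^((2:ℝ))) := by ring
    have hge : 2*a*(2-q) ≤ 2*a*(2-q) * T1^((2:ℝ)) := le_mul_of_one_le_right (by positivity) h1le
    simp only [hPdef]
    nlinarith
  have ht0T1 : t0 ≤ T1 := hT1gt.le
  obtain ⟨σ, hσIoo, hσ0⟩ := intermediate_value_Ioo' ht0T1 hPc.continuousOn
    ⟨hPT1, hPpos0 t0 (Set.right_mem_Icc.2 ht0.le)⟩
  have hσt0 : t0 < σ := hσIoo.1
  have hσpos : 0 < σ := ht0.trans hσt0
  have hPpos : ∀ x, 0 ≤ x → x < σ → 0 < Φ x := by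
    intro x hx0 hxσ
    rcases le_or_gt x t0 with h|h
    · exact hPpos0 x ⟨hx0, h⟩
    · have h1 := hPanti (Set.mem_Ici.2 h.le) (Set.mem_Ici.2 hσt0.le) hxσ
      rw [hσ0] at h1; exact h1
  have hPneg : ∀ x, σ < x → Φ x < 0 := by
    intro x hx
    have h1 := hPanti (Set.mem_Ici.2 hσt0.le) (Set.mem_Ici.2 (hσt0.le.trans hx.le)) hx
    rw [hσ0] at h1; exact h1
  -- monotonicity of H
  have hHmono : StrictMonoOn H (Set.Icc 0 σ) := by
    apply strictMonoOn_of_deriv_pos (convex_Icc _ _) hHc.continuousOn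
    intro x hx
    rw [interior_Icc] at hx
    rw [(hHD x hx.1).deriv]
    exact mul_pos (Real.rpow_pos_of_pos hx.1 _) (hPpos x hx.1.le hx.2)
  have hHanti : StrictAntiOn H (Set.Ici σ) := by
    apply strictAntiOn_of_deriv_neg (convex_Ici _) hHc.continuousOn
    intro x hx
    rw [interior_Ici] at hx
    have hx0 : 0 < x := hσpos.trans hx
    rw [(hHD x hx0).deriv]
    exact mul_neg_of_pos_of_neg (Real.rpow_pos_of_pos hx0 _) (hPneg x hx)
  have hH0 : H 0 = -(d*q) := by
    simp [hHdef, Real.zero_rpow h2q.ne', Real.zero_rpow h4q.ne', Real.zero_rpow hpq.ne']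
  have hf0 : a * (0:ℝ) ^ 2 + b * (0:ℝ) ^ 4 - c * (0:ℝ) ^ p - d * (0:ℝ) ^ q = 0 := by
    simp [Real.zero_rpow hp0.ne', Real.zero_rpow hq0.ne']
  have hft0 : 0 < a*t0^2 + b*t0^4 - c*t0^p - d*t0^q := by
    have hbc : (0:ℝ) < b / c := by positivity
    have hXsplit : ∀ y : ℝ, X ^ y = K ^ y * (b/c) ^ y := by
      intro y; rw [hXdef, mul_div_assoc, Real.mul_rpow hK0.le hbc.le]
    have ht0n : ∀ y : ℝ, t0 ^ y = X ^ (y/(p-4)) := by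
      intro y
      rw [ht0def, ← Real.rpow_mul hX.le]
      congr 1; ring
    have ht02 : t0 ^ (2:ℕ) = X ^ (2/(p-4)) := by
      rw [← Real.rpow_natCast t0 2, ht0n]; norm_num
    have ht04 : t0 ^ (4:ℕ) = X ^ (4/(p-4)) := by
      rw [← Real.rpow_natCast t0 4, ht0n]; norm_num
    have hXq : 0 < X ^ (q/(p-4)) := Real.rpow_pos_of_pos hX _
    have hW2 : 0 < (b/c) ^ ((2-q)/(p-4)) := Real.rpow_pos_of_pos hbc _
    have hW4 : 0 < (b/c) ^ ((4-q)/(p-4)) := Real.rpow_pos_of_pos hbc _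
    have kpos : ∀ y : ℝ, 0 < K ^ y := fun y => Real.rpow_pos_of_pos hK0 y
    have s2 : X ^ (2/(p-4))
        = K^((2-q)/(p-4)) * (b/c)^((2-q)/(p-4)) * X ^ (q/(p-4)) := by
      rw [show (2:ℝ)/(p-4) = (2-q)/(p-4) + q/(p-4) by ring, Real.rpow_add hX, hXsplit]
    have s4 : X ^ (4/(p-4))
        = K^((4-q)/(p-4)) * (b/c)^((4-q)/(p-4)) * X ^ (q/(p-4)) := by
      rw [show (4:ℝ)/(p-4) = (4-q)/(p-4) + q/(p-4) by ring, Real.rpow_add hX, hXsplit]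
    have sp : X ^ (p/(p-4))
        = (K*(b/c)) * (K^((4-q)/(p-4)) * (b/c)^((4-q)/(p-4))) * X ^ (q/(p-4)) := by
      rw [show p/(p-4) = 1 + ((4-q)/(p-4) + q/(p-4)) by field_simp; ring,
        Real.rpow_add hX, Real.rpow_add hX, Real.rpow_one, hXsplit ((4-q)/(p-4))]
      rw [hXdef, mul_div_assoc]; ring
    have e1 : K^((4-q)/(p-4)) = K^((2-q)/(p-4)) * K^(2/(p-4)) := by
      rw [← Real.rpow_add hK0]; congr 1; ring
    have e2 : K^((p-q)/(p-4)) = K^((2-q)/(p-4)) * K^((p-2)/(p-4)) := by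
      rw [← Real.rpow_add hK0]; congr 1; ring
    have e3 : K^((p-q)/(p-4)) = K^((4-q)/(p-4)) * K := by
      rw [show (p-q)/(p-4) = (4-q)/(p-4) + 1 by field_simp; ring,
        Real.rpow_add hK0, Real.rpow_one]
    have klt : K^(2/(p-4)) < 1 := Real.rpow_lt_one hK0.le hK1 (by positivity)
    have key3 : K^((4-q)/(p-4)) - K^((p-q)/(p-4)) ≤ K^((2-q)/(p-4)) := by
      rw [e1, e2]
      have h1 : K^((2-q)/(p-4)) * K^(2/(p-4)) ≤ K^((2-q)/(p-4)) * 1 :=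
        mul_le_mul_of_nonneg_left klt.le (kpos _).le
      have h2 : 0 ≤ K^((2-q)/(p-4)) * K^((p-2)/(p-4)) :=
        le_of_lt (mul_pos (kpos _) (kpos _))
      linarith
    have w2 : b ^ ((p-q)/(p-4)) = b * b^((4-q)/(p-4)) := by
      rw [show (p-q)/(p-4) = 1 + (4-q)/(p-4) by field_simp; ring,
        Real.rpow_add hb, Real.rpow_one]
    have hcond2 : d * (X^(q/(p-4))) <
        ((K ^ ((4 - q) / (p - 4)) - K ^ ((p - q) / (p - 4))) *
          ((a / d) * (b / c) ^ ((2 - q) / (p - 4)) +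
            (1 / d) * b ^ ((p - q) / (p - 4)) / c ^ ((4 - q) / (p - 4)))) *
          (d * (X^(q/(p-4)))) := by
      calc d * (X^(q/(p-4))) = 1 * (d * (X^(q/(p-4)))) := (one_mul _).symm
      _ < _ := mul_lt_mul_of_pos_right hcond (by positivity)
    have expand : ((K ^ ((4 - q) / (p - 4)) - K ^ ((p - q) / (p - 4))) *
          ((a / d) * (b / c) ^ ((2 - q) / (p - 4)) +
            (1 / d) * b ^ ((p - q) / (p - 4)) / c ^ ((4 - q) / (p - 4)))) *
          (d * (X^(q/(p-4))))
        = (K ^ ((4 - q) / (p - 4)) - K ^ ((p - q) / (p - 4)))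
            * a * (b/c)^((2-q)/(p-4)) * (X^(q/(p-4)))
          + (K ^ ((4 - q) / (p - 4)) - K ^ ((p - q) / (p - 4)))
            * (b * (b/c)^((4-q)/(p-4))) * (X^(q/(p-4))) := by
      rw [w2, Real.div_rpow hb.le hc.le ((4-q)/(p-4))]
      have hcne : c ^ ((4-q)/(p-4)) ≠ 0 := (Real.rpow_pos_of_pos hc _).ne'
      field_simp
    rw [expand] at hcond2
    have hmul := mul_le_mul_of_nonneg_right key3
      (show (0:ℝ) ≤ a * (b/c)^((2-q)/(p-4)) * (X^(q/(p-4))) by positivity)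
    have Geq : a * (X ^ (2/(p-4))) + b * (X ^ (4/(p-4))) - c * (X ^ (p/(p-4)))
          - d * (X ^ (q/(p-4)))
        = a * (K^((2-q)/(p-4)) * (b/c)^((2-q)/(p-4))) * (X^(q/(p-4)))
          + (K ^ ((4 - q) / (p - 4)) - K ^ ((p - q) / (p - 4)))
            * (b * (b/c)^((4-q)/(p-4))) * (X^(q/(p-4)))
          - d * (X^(q/(p-4))) := by
      rw [s2, s4, sp, e3]
      field_simp
      ring
    rw [ht02, ht04, ht0n p, ht0n q, Geq]
    linarith [hcond2, hmul]

  have hHσ : 0 < H σ := by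
    by_contra hσle
    push_neg at hσle
    have hHle : ∀ x : ℝ, 0 < x → H x ≤ 0 := by
      intro x hx
      rcases le_or_gt x σ with h|h
      · exact le_trans (hHmono.monotoneOn ⟨hx.le, h⟩ ⟨hσpos.le, le_refl σ⟩ h) hσle
      · exact le_trans (hHanti (Set.mem_Ici.2 (le_refl σ)) (Set.mem_Ici.2 h.le) h).le hσle
    have hanti : AntitoneOn (fun t : ℝ => a*t^2+b*t^4-c*t^p-d*t^q) (Set.Ici 0) := by
      apply antitoneOn_of_deriv_nonpos (convex_Ici _) hfc.continuousOn
      · intro x hx; rw [interior_Ici] at hx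
        exact (hfD x hx).differentiableAt.differentiableWithinAt
      · intro x hx; rw [interior_Ici] at hx
        rw [(hfD x hx).deriv]
        exact mul_nonpos_of_nonneg_of_nonpos (Real.rpow_nonneg hx.le _) (hHle x hx)
    have := hanti (Set.mem_Ici.2 (le_refl 0)) (Set.mem_Ici.2 ht0.le) ht0.le
    simp only at this
    rw [hf0] at this
    linarith
  obtain ⟨T2, hT2gt, hT2ge1, hT2big⟩ := bigRpow (2*a+4*b) (c*p) (p-4) σ
    (by positivity) (by positivity) hp4
  have hHT2 : H T2 < 0 := by
    have hT2pos : (0:ℝ) < T2 := by linarith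
    have e24 : T2^(2-q) ≤ T2^(4-q) := Real.rpow_le_rpow_of_exponent_le hT2ge1 (by linarith)
    have hsplit : T2^(p-q) = T2^(p-4) * T2^(4-q) := by
      rw [← Real.rpow_add hT2pos, show p-4+(4-q) = p-q by ring]
    have key : (2*a+4*b) * T2^(4-q) < c*p*T2^(p-q) := by
      rw [hsplit]
      calc (2*a+4*b) * T2^(4-q) < (c*p*T2^(p-4)) * T2^(4-q) :=
        mul_lt_mul_of_pos_right hT2big (Real.rpow_pos_of_pos hT2pos _)
      _ = c*p*(T2^(p-4) * T2^(4-q)) := by ring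
    have h2a : 2*a*T2^(2-q) ≤ 2*a*T2^(4-q) :=
      mul_le_mul_of_nonneg_left e24 (by positivity)
    have hdq : 0 < d*q := by positivity
    simp only [hHdef]
    linarith
  obtain ⟨t₁, ht₁Ioo, ht₁0⟩ := intermediate_value_Ioo hσpos.le hHc.continuousOn
    ⟨by rw [hH0]; simp; positivity, hHσ⟩
  obtain ⟨t₂, ht₂Ioo, ht₂0⟩ := intermediate_value_Ioo' hT2gt.le hHc.continuousOn ⟨hHT2, hHσ⟩
  -- chunk 3: assembly
  have ht₁pos : 0 < t₁ := ht₁Ioo.1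
  have ht₁σ : t₁ < σ := ht₁Ioo.2
  have hσt₂ : σ < t₂ := ht₂Ioo.1
  have ht₁t₂ : t₁ < t₂ := ht₁σ.trans hσt₂
  have ht₂pos : 0 < t₂ := hσpos.trans hσt₂
  have hHneg1 : ∀ x, 0 < x → x < t₁ → H x < 0 := by
    intro x hx0 hx1
    have h := hHmono ⟨hx0.le, (hx1.trans ht₁σ).le⟩ ⟨ht₁pos.le, ht₁σ.le⟩ hx1
    rw [ht₁0] at h; exact h
  have hHpos : ∀ x, t₁ < x → x < t₂ → 0 < H x := by
    intro x hx1 hx2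
    rcases le_or_gt x σ with h|h
    · have h' := hHmono ⟨ht₁pos.le, ht₁σ.le⟩ ⟨(ht₁pos.trans hx1).le, h⟩ hx1
      rw [ht₁0] at h'; exact h'
    · have h' := hHanti (Set.mem_Ici.2 h.le) (Set.mem_Ici.2 (h.le.trans hx2.le)) hx2
      rw [ht₂0] at h'; exact h'
  have hHneg2 : ∀ x, t₂ < x → H x < 0 := by
    intro x hx
    have h := hHanti (Set.mem_Ici.2 hσt₂.le) (Set.mem_Ici.2 (hσt₂.le.trans hx.le)) hx
    rw [ht₂0] at h; exact h
  have hfanti1 : StrictAntiOn (fun t : ℝ => a*t^2+b*t^4-c*t^p-d*t^q) (Set.Icc 0 t₁) := by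
    apply strictAntiOn_of_deriv_neg (convex_Icc _ _) hfc.continuousOn
    intro x hx; rw [interior_Icc] at hx
    rw [(hfD x hx.1).deriv]
    exact mul_neg_of_pos_of_neg (Real.rpow_pos_of_pos hx.1 _) (hHneg1 x hx.1 hx.2)
  have hfmono : StrictMonoOn (fun t : ℝ => a*t^2+b*t^4-c*t^p-d*t^q) (Set.Icc t₁ t₂) := by
    apply strictMonoOn_of_deriv_pos (convex_Icc _ _) hfc.continuousOn
    intro x hx; rw [interior_Icc] at hx
    have hx0 : 0 < x := ht₁pos.trans hx.1
    rw [(hfD x hx0).deriv]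
    exact mul_pos (Real.rpow_pos_of_pos hx0 _) (hHpos x hx.1 hx.2)
  have hfanti2 : StrictAntiOn (fun t : ℝ => a*t^2+b*t^4-c*t^p-d*t^q) (Set.Ici t₂) := by
    apply strictAntiOn_of_deriv_neg (convex_Ici _) hfc.continuousOn
    intro x hx; rw [interior_Ici] at hx
    have hx0 : 0 < x := ht₂pos.trans hx
    rw [(hfD x hx0).deriv]
    exact mul_neg_of_pos_of_neg (Real.rpow_pos_of_pos hx0 _) (hHneg2 x hx)
  have hft₁neg : a*t₁^2+b*t₁^4-c*t₁^p-d*t₁^q < 0 := by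
    have h1 := hfanti1 (Set.left_mem_Icc.2 ht₁pos.le) (Set.right_mem_Icc.2 ht₁pos.le) ht₁pos
    calc a*t₁^2+b*t₁^4-c*t₁^p-d*t₁^q < a*(0:ℝ)^2+b*(0:ℝ)^4-c*(0:ℝ)^p-d*(0:ℝ)^q := h1
    _ = 0 := hf0
  have ht₁t0 : t₁ < t0 := by
    by_contra hcon
    push_neg at hcon
    have h1 := hfanti1 (Set.left_mem_Icc.2 ht₁pos.le) ⟨ht0.le, hcon⟩ ht0
    have h2 : a*t0^2+b*t0^4-c*t0^p-d*t0^q < 0 := by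
      calc a*t0^2+b*t0^4-c*t0^p-d*t0^q < a*(0:ℝ)^2+b*(0:ℝ)^4-c*(0:ℝ)^p-d*(0:ℝ)^q := h1
      _ = 0 := hf0
    linarith
  have hft₂pos : 0 < a*t₂^2+b*t₂^4-c*t₂^p-d*t₂^q := by
    rcases le_or_gt t0 t₂ with h|h
    · rcases eq_or_lt_of_le h with he|hlt
      · rw [← he]; exact hft0
      · have h1 := hfmono ⟨ht₁t0.le, h⟩ (Set.right_mem_Icc.2 ht₁t₂.le) hlt
        exact hft0.trans h1
    · have h1 := hfanti2 Set.self_mem_Ici (Set.mem_Ici.2 h.le) h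
      exact hft0.trans h1
  refine ⟨t₁, t₂, ht₁pos, ht₁t₂, hft₁neg, hft₂pos, ⟨min t₁ (t₂ - t₁), by
      simp only [lt_min_iff]; exact ⟨ht₁pos, by linarith⟩, ?_⟩, ?_⟩
  · intro t ht htabs htne
    rcases lt_or_gt_of_ne htne with h|h
    · exact hfanti1 ⟨ht, h.le⟩ (Set.right_mem_Icc.2 ht₁pos.le) h
    · have h2 : t < t₂ := by
        have h4 := le_abs_self (t - t₁)
        have h5 := (lt_min_iff.1 htabs).2
        linarith
      exact hfmono (Set.left_mem_Icc.2 ht₁t₂.le) ⟨h.le, h2.le⟩ h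
  · intro t ht htne
    rcases le_or_gt t t₁ with h|h
    · have hFt : a*t^2+b*t^4-c*t^p-d*t^q ≤ 0 := by
        rcases eq_or_lt_of_le ht with h0|h0
        · rw [← h0]; exact le_of_eq hf0
        · have h1 := hfanti1 (Set.left_mem_Icc.2 ht₁pos.le) ⟨h0.le, h⟩ h0
          have h2 : a*t^2+b*t^4-c*t^p-d*t^q < 0 := by
            calc a*t^2+b*t^4-c*t^p-d*t^q < a*(0:ℝ)^2+b*(0:ℝ)^4-c*(0:ℝ)^p-d*(0:ℝ)^q := h1
            _ = 0 := hf0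
          exact h2.le
      exact lt_of_le_of_lt hFt hft₂pos
    · rcases lt_or_ge t t₂ with h2|h2
      · exact hfmono ⟨h.le, h2.le⟩ (Set.right_mem_Icc.2 ht₁t₂.le) h2
      · have h3 : t₂ < t := lt_of_le_of_ne h2 (Ne.symm htne)
        exact hfanti2 Set.self_mem_Ici (Set.mem_Ici.2 h3.le) h3
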